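/- Let 𝐌 be an m×n matrix with entries in 𝕂 and set v_{ij} := val(𝐌_{ij}) ∈ ℝ∪{−∞}. Suppose that for every pair of subsets K ⊆ {1,…,m} and L ⊆ {1,…,n} with |K| = |L|, the maximum over all bijections σ : K → L of Σ_{k∈K} v_{k σ(k)} is not −∞ and is attained at exactly one bijection. Then every square submatrix of 𝐌 has nonzero determinant, i.e., no minor of 𝐌 is null. -/

import Mathlib

/-- The field of generalized real Puiseux series: Hahn series over `ℝ`
whose exponent group is `ℝ` with the reversed order (so supports have a
largest real exponent). -/
abbrev PSeries : Type := HahnSeries ℝᵒᵈ ℝ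

open Classical in
/-- The valuation of a generalized Puiseux series: its largest exponent,
with `val 0 = ⊥ = -∞`. -/
noncomputable def pval (x : PSeries) : WithBot ℝ :=
  if x = 0 then ⊥ else ((OrderDual.ofDual x.order : ℝ) : WithBot ℝ)

open Classical in
lemma pval_zero : pval 0 = ⊥ := by simp [pval]

open Classical in
lemma pval_of_ne {x : PSeries} (hx : x ≠ 0) :
    pval x = ((OrderDual.ofDual x.order : ℝ) : WithBot ℝ) := by simp [pval, hx]

lemma pval_eq_bot_iff {x : PSeries} : pval x = ⊥ ↔ x = 0 := by
  constructor
  · intro h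
    by_contra hx
    rw [pval_of_ne hx] at h
    exact WithBot.coe_ne_bot h
  · rintro rfl; exact pval_zero

lemma pval_one : pval (1 : PSeries) = 0 := by
  rw [pval_of_ne one_ne_zero, HahnSeries.order_one]
  rfl

lemma pval_neg (x : PSeries) : pval (-x) = pval x := by
  by_cases hx : x = 0
  · simp [hx]
  · rw [pval_of_ne (neg_ne_zero.mpr hx), pval_of_ne hx, HahnSeries.order_neg]

lemma pval_mul (x y : PSeries) : pval (x * y) = pval x + pval y := by
  by_cases hx : x = 0
  · simp [hx, pval_zero]
  by_cases hy : y = 0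
  · simp [hy, pval_zero]
  have hxy : x * y ≠ 0 := mul_ne_zero hx hy
  rw [pval_of_ne hxy, pval_of_ne hx, pval_of_ne hy,
    HahnSeries.order_mul hx hy]
  norm_cast

lemma pval_add_le (x y : PSeries) : pval (x + y) ≤ max (pval x) (pval y) := by
  by_cases hxy : x + y = 0
  · simp [hxy, pval_zero]
  by_cases hx : x = 0
  · simp [hx]
  by_cases hy : y = 0
  · simp [hy]
  have h := HahnSeries.min_order_le_order_add hxy
  rw [pval_of_ne hxy, pval_of_ne hx, pval_of_ne hy]
  rcases min_cases x.order y.order with ⟨he, _⟩ | ⟨he, _⟩ <;> rw [he] at h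
  · exact le_max_of_le_left (by exact_mod_cast h)
  · exact le_max_of_le_right (by exact_mod_cast h)

lemma pval_add_eq {x y : PSeries} (h : pval y < pval x) : pval (x + y) = pval x := by
  apply le_antisymm
  · exact (pval_add_le x y).trans (le_of_eq (max_eq_left h.le))
  · have h2 : pval x ≤ max (pval (x + y)) (pval y) := by
      have := pval_add_le (x + y) (-y)
      rw [pval_neg] at this
      simpa using this
    rcases max_cases (pval (x + y)) (pval y) with ⟨he, _⟩ | ⟨he, _⟩ <;> rw [he] at h2
    · exact h2
    · exact absurd h2 (not_le.mpr h)

lemma pval_sum_le {α : Type*} (s : Finset α) (f : α → PSeries) :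
    pval (∑ i ∈ s, f i) ≤ s.sup (fun i => pval (f i)) := by
  classical
  induction s using Finset.induction_on with
  | empty => simp [pval_zero]
  | insert _ _ ha ih =>
    rename_i a s
    rw [Finset.sum_insert ha, Finset.sup_insert]
    exact (pval_add_le _ _).trans (max_le_max le_rfl ih)

lemma pval_prod {α : Type*} (s : Finset α) (f : α → PSeries) :
    pval (∏ i ∈ s, f i) = ∑ i ∈ s, pval (f i) := by
  classical
  induction s using Finset.induction_on with
  | empty => simp [pval_one]
  | insert _ _ ha ih =>
    rename_i a s
    rw [Finset.prod_insert ha, Finset.sum_insert ha, pval_mul, ih]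

lemma pval_sign {r : ℕ} (π : Equiv.Perm (Fin r)) :
    pval (((Equiv.Perm.sign π : ℤ) : PSeries)) = 0 := by
  rcases Int.units_eq_one_or (Equiv.Perm.sign π) with h | h <;> rw [h]
  · norm_num [pval_one]
  · push_cast
    rw [pval_neg, pval_one]

/-- Key lemma: if the permanent-maximum is attained at a unique permutation and
is not `⊥`, then the determinant is nonzero. -/
lemma det_ne_zero_of_unique_max {r : ℕ} (N : Matrix (Fin r) (Fin r) PSeries)
    (π₀ : Equiv.Perm (Fin r))
    (h0 : (∑ a, pval (N (π₀ a) a)) ≠ ⊥)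
    (h1 : ∀ π : Equiv.Perm (Fin r), π ≠ π₀ →
      ∑ a, pval (N (π a) a) < ∑ a, pval (N (π₀ a) a)) : N.det ≠ 0 := by
  classical
  set v₀ := ∑ a, pval (N (π₀ a) a) with hv₀
  have hterm : ∀ π : Equiv.Perm (Fin r),
      pval (((Equiv.Perm.sign π : ℤ) : PSeries) * ∏ i, N (π i) i)
        = ∑ a, pval (N (π a) a) := by
    intro π
    rw [pval_mul, pval_sign, pval_prod, zero_add]
  have hdet : N.det = ((Equiv.Perm.sign π₀ : ℤ) : PSeries) * ∏ i, N (π₀ i) i +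
      ∑ π ∈ Finset.univ.erase π₀,
        ((Equiv.Perm.sign π : ℤ) : PSeries) * ∏ i, N (π i) i := by
    rw [Matrix.det_apply']
    rw [← Finset.add_sum_erase _ _ (Finset.mem_univ π₀)]
  have hrest : pval (∑ π ∈ Finset.univ.erase π₀,
      ((Equiv.Perm.sign π : ℤ) : PSeries) * ∏ i, N (π i) i) < v₀ := by
    refine lt_of_le_of_lt (pval_sum_le _ _) ?_
    rw [Finset.sup_lt_iff (Ne.bot_lt h0)]
    intro π hπ
    rw [hterm]
    exact h1 π (Finset.ne_of_mem_erase hπ)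
  have : pval N.det = v₀ := by
    rw [hdet, pval_add_eq (by rw [hterm]; exact hrest)]
    exact hterm π₀
  intro hc
  rw [hc, pval_zero] at this
  exact h0 this.symm

/-- if for every pair of equal-cardinality subsets `K`, `L` of the
row and column indices the assignment maximum `max_σ ∑_{k ∈ K} val (M k (σ k))`
over bijections `σ : K → L` is not `-∞` and is attained at a unique bijection,
then every square submatrix of `M` has nonzero determinant. -/
theorem stmt2 {m n : ℕ} (M : Matrix (Fin m) (Fin n) PSeries)
    (h : ∀ (K : Finset (Fin m)) (L : Finset (Fin n)), K.card = L.card →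
      ∃ σ : {i // i ∈ K} ≃ {j // j ∈ L},
        (∑ k : {i // i ∈ K}, pval (M k.1 (σ k).1)) ≠ ⊥ ∧
        ∀ τ : {i // i ∈ K} ≃ {j // j ∈ L}, τ ≠ σ →
          ∑ k : {i // i ∈ K}, pval (M k.1 (τ k).1) <
            ∑ k : {i // i ∈ K}, pval (M k.1 (σ k).1)) :
    ∀ (K : Finset (Fin m)) (L : Finset (Fin n)) (hKL : K.card = L.card),
      (M.submatrix
        (fun a : Fin K.card => ((K.orderIsoOfFin rfl a : {i // i ∈ K}) : Fin m))
        (fun b : Fin K.card =>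
          ((L.orderIsoOfFin hKL.symm b : {j // j ∈ L}) : Fin n))).det ≠ 0 := by
  intro K L hKL
  obtain ⟨σ₀, hσ₀bot, hσ₀max⟩ := h K L hKL
  set e₁ : Fin K.card ≃o {i // i ∈ K} := K.orderIsoOfFin rfl with he₁
  set e₂ : Fin K.card ≃o {j // j ∈ L} := L.orderIsoOfFin hKL.symm with he₂
  set N : Matrix (Fin K.card) (Fin K.card) PSeries :=
    M.submatrix (fun a => ((e₁ a : {i // i ∈ K}) : Fin m))
      (fun b => ((e₂ b : {j // j ∈ L}) : Fin n)) with hN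
  -- to each permutation `π` associate the bijection `σ_π : k ↦ e₂ (π⁻¹ (e₁⁻¹ k))`
  set Φ : Equiv.Perm (Fin K.card) → ({i // i ∈ K} ≃ {j // j ∈ L}) :=
    fun π => (e₁.toEquiv.symm.trans π⁻¹).trans e₂.toEquiv with hΦ
  have hΦinj : Function.Injective Φ := by
    intro π π' hpp
    have : (π : Equiv.Perm (Fin K.card))⁻¹ = π'⁻¹ := by
      refine Equiv.ext fun a => ?_
      have := congrArg (fun σ => (e₂.toEquiv.symm (σ (e₁ a)))) hpp
      simpa [hΦ] using this
    simpa using congrArg (·⁻¹) this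
  -- sums transform correctly
  have hsum : ∀ π : Equiv.Perm (Fin K.card),
      (∑ k : {i // i ∈ K}, pval (M k.1 ((Φ π) k).1)) = ∑ a, pval (N (π a) a) := by
    intro π
    rw [← Equiv.sum_comp e₁.toEquiv (fun k => pval (M k.1 ((Φ π) k).1))]
    rw [← Equiv.sum_comp π⁻¹ (fun a => pval (N (π a) a))]
    refine Finset.sum_congr rfl fun a _ => ?_
    simp [hΦ, hN, Matrix.submatrix_apply]
  set π₀ : Equiv.Perm (Fin K.card) :=
    ((e₁.toEquiv.trans σ₀).trans e₂.toEquiv.symm).symm with hπ₀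
  have hΦπ₀ : Φ π₀ = σ₀ := by
    ext k
    simp [hΦ, hπ₀, Equiv.Perm.inv_def]
  refine det_ne_zero_of_unique_max N π₀ ?_ ?_
  · rw [← hsum π₀, hΦπ₀]; exact hσ₀bot
  · intro π hπ
    rw [← hsum π, ← hsum π₀, hΦπ₀]
    exact hσ₀max (Φ π) (fun hc => hπ (hΦinj (by rw [hc, hΦπ₀])))
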